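/- Let α ∈ (0,1) be irrational and let (q_n) be the sequence of denominators of its continued fraction convergents. Then for every n ≥ 1 and every x ∈ ℝ there exists an integer j with 0 ≤ j < q_n and ‖jα − x‖ ≤ 2/q_n. -/
import Mathlib


/-- Distance from a real number to the nearest integer. -/
noncomputable def distToInt (x : ℝ) : ℝ := |x - round x|

open GenContFract

/-- The continuants of `GenContFract.of α` are integers. -/
lemma contsAux_int (α : ℝ) : ∀ n : ℕ,
    (∃ a : ℤ, ((GenContFract.of α).contsAux n).a = (a : ℝ)) ∧
    (∃ b : ℤ, ((GenContFract.of α).contsAux n).b = (b : ℝ)) ∧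
    (∃ a : ℤ, ((GenContFract.of α).contsAux (n+1)).a = (a : ℝ)) ∧
    (∃ b : ℤ, ((GenContFract.of α).contsAux (n+1)).b = (b : ℝ)) := by
  intro n
  induction n with
  | zero =>
    refine ⟨⟨1, by simp [contsAux]⟩, ⟨0, by simp [contsAux]⟩,
      ⟨⌊α⌋, by simp [contsAux, of_h_eq_floor]⟩, ⟨1, by simp [contsAux]⟩⟩
  | succ n ih =>
    obtain ⟨⟨a0, ha0⟩, ⟨b0, hb0⟩, ⟨a1, ha1⟩, ⟨b1, hb1⟩⟩ := ih
    rcases hs : (GenContFract.of α).s.get? n with _ | gp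
    · have heq : (GenContFract.of α).contsAux (n + 1 + 1) = (GenContFract.of α).contsAux (n + 1) := by
        simp [contsAux, hs]
      exact ⟨⟨a1, ha1⟩, ⟨b1, hb1⟩, ⟨a1, heq ▸ ha1⟩, ⟨b1, heq ▸ hb1⟩⟩
    · obtain ⟨hga, z, hgz⟩ := of_partNum_eq_one_and_exists_int_partDen_eq hs
      have hrec := contsAux_recurrence hs rfl rfl
      have hrA : ((GenContFract.of α).contsAux (n + 2)).a =
          gp.b * ((GenContFract.of α).contsAux (n + 1)).a
            + gp.a * ((GenContFract.of α).contsAux n).a := by rw [hrec]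
      have hrB : ((GenContFract.of α).contsAux (n + 2)).b =
          gp.b * ((GenContFract.of α).contsAux (n + 1)).b
            + gp.a * ((GenContFract.of α).contsAux n).b := by rw [hrec]
      refine ⟨⟨a1, ha1⟩, ⟨b1, hb1⟩, ⟨z * a1 + a0, ?_⟩, ⟨z * b1 + b0, ?_⟩⟩
      · rw [hrA, hgz, hga, ha0, ha1]; push_cast; ring
      · rw [hrB, hgz, hga, hb0, hb1]; push_cast; ring

/-- The orbit `{jα}_{0 ≤ j < q_n}` of the rotation by `α` is `2/q_n`-dense on the
circle, where `q_n` is the `n`-th continued fraction denominator of `α`. -/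
theorem stmt15 (α : ℝ) (hα : α ∈ Set.Ioo (0 : ℝ) 1) (hirr : Irrational α) :
    ∀ n : ℕ, 1 ≤ n → ∀ x : ℝ, ∃ j : ℕ,
      (j : ℝ) < (GenContFract.of α).dens n ∧
      distToInt (j * α - x) ≤ 2 / (GenContFract.of α).dens n := by
  intro n hn x
  -- non-termination
  have hnt : ∀ m : ℕ, ¬(GenContFract.of α).TerminatedAt m := by
    intro m hm
    have : (GenContFract.of α).Terminates := ⟨m, hm⟩
    obtain ⟨q, hq⟩ := (terminates_iff_rat α).mp this
    exact hirr ⟨q, hq.symm⟩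
  -- integer values of numerators and denominators
  obtain ⟨_, _, ⟨N, hN⟩, ⟨B, hBr⟩⟩ := contsAux_int α n
  obtain ⟨_, _, ⟨N', hN'⟩, ⟨B', hB'r⟩⟩ := contsAux_int α (n + 1)
  have hnum : (GenContFract.of α).nums n = (N : ℝ) := by
    rw [num_eq_conts_a, nth_cont_eq_succ_nth_contAux]; exact hN
  have hden : (GenContFract.of α).dens n = (B : ℝ) := by
    rw [den_eq_conts_b, nth_cont_eq_succ_nth_contAux]; exact hBr
  have hnum' : (GenContFract.of α).nums (n+1) = (N' : ℝ) := by
    rw [num_eq_conts_a, nth_cont_eq_succ_nth_contAux]; exact hN'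
  have hden' : (GenContFract.of α).dens (n+1) = (B' : ℝ) := by
    rw [den_eq_conts_b, nth_cont_eq_succ_nth_contAux]; exact hB'r
  -- denominator bounds
  have hB1R : (1 : ℝ) ≤ (GenContFract.of α).dens n := by
    have h := succ_nth_fib_le_of_nth_den (K := ℝ) (v := α) (n := n) (Or.inr (hnt _))
    have hfib : (1 : ℕ) ≤ Nat.fib (n + 1) := Nat.fib_pos.mpr (Nat.succ_pos n)
    calc (1:ℝ) ≤ (Nat.fib (n+1) : ℝ) := by exact_mod_cast hfib
    _ ≤ _ := h
  have hBmono : (GenContFract.of α).dens n ≤ (GenContFract.of α).dens (n+1) := of_den_mono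
  have hB1 : (1 : ℤ) ≤ B := by exact_mod_cast hden ▸ hB1R
  have hB0 : (0 : ℤ) < B := by omega
  have hBR0 : (0 : ℝ) < (B : ℝ) := by exact_mod_cast hB0
  have hq0 : (B : ℝ) ≠ 0 := ne_of_gt hBR0
  have hq' : (B : ℝ) ≤ (B' : ℝ) := by rw [hden, hden'] at hBmono; exact hBmono
  have hq'0 : (0:ℝ) < (B' : ℝ) := lt_of_lt_of_le hBR0 hq'
  have hB'0 : (B' : ℝ) ≠ 0 := ne_of_gt hq'0
  -- determinant / coprimality
  have hdetR := SimpContFract.determinant (s := SimpContFract.of α) (n := n) (hnt n)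
  have hdet : N * B' - B * N' = (-1 : ℤ) ^ (n + 1) := by
    have h : ((N * B' - B * N' : ℤ) : ℝ) = (((-1 : ℤ) ^ (n + 1) : ℤ) : ℝ) := by
      push_cast
      rw [← hnum, ← hden, ← hnum', ← hden']
      exact hdetR
    exact_mod_cast h
  have hcop : IsCoprime N B := by
    refine ⟨(-1 : ℤ) ^ (n + 1) * B', -((-1 : ℤ) ^ (n + 1) * N'), ?_⟩
    have h2 : ((-1 : ℤ) ^ (n + 1)) * ((-1 : ℤ) ^ (n + 1)) = 1 := by
      rw [← mul_pow]; norm_num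
    linear_combination ((-1 : ℤ) ^ (n + 1)) * hdet + h2
  obtain ⟨u, v, huv⟩ := hcop
  -- choose j
  set m : ℤ := round ((B : ℝ) * x) with hm
  set j : ℤ := (m * u) % B with hj
  have hj0 : 0 ≤ j := Int.emod_nonneg _ (by omega)
  have hjB : j < B := Int.emod_lt_of_pos _ hB0
  have hdvd : ∃ t : ℤ, j * N - m = B * t := by
    have hk : j = m * u - B * (m * u / B) := Int.emod_def (m * u) B
    have h2 : m * u * N - m = -(m * v) * B := by linear_combination m * huv
    refine ⟨-(m * v) - (m * u / B) * N, ?_⟩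
    linear_combination N * hk + h2
  obtain ⟨t, ht⟩ := hdvd
  -- real estimates
  have hconv : |α - (N : ℝ) / (B : ℝ)| ≤ 1 / ((B : ℝ) * (B' : ℝ)) := by
    have h := abs_sub_convs_le (v := α) (n := n) (hnt n)
    rwa [conv_eq_num_div_den, hnum, hden, hden'] at h
  have hjR : (0:ℝ) ≤ (j:ℝ) := by exact_mod_cast hj0
  have hjRB : (j:ℝ) < (B : ℝ) := by exact_mod_cast hjB
  have habs1 : |(j:ℝ) * (α - (N:ℝ)/(B : ℝ))| ≤ 1 / (B : ℝ) := by
    rw [abs_mul, abs_of_nonneg hjR]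
    calc (j:ℝ) * |α - (N:ℝ)/(B : ℝ)| ≤ (B : ℝ) * (1 / ((B : ℝ) * (B':ℝ))) := by
          apply mul_le_mul (le_of_lt hjRB) hconv (abs_nonneg _) (le_of_lt hBR0)
      _ = 1 / (B':ℝ) := by field_simp
      _ ≤ 1 / (B : ℝ) := one_div_le_one_div_of_le hBR0 hq'
  have habs2 : |(m:ℝ)/(B : ℝ) - x| ≤ 1 / (2 * (B : ℝ)) := by
    have h : |(B : ℝ) * x - (m:ℝ)| ≤ 1/2 := abs_sub_round ((B : ℝ) * x)
    have he : (m:ℝ)/(B : ℝ) - x = ((m:ℝ) - (B : ℝ) * x)/(B : ℝ) := by field_simp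
    rw [he, abs_div, abs_of_pos hBR0, abs_sub_comm]
    rw [div_le_div_iff₀ hBR0 (by positivity)]
    nlinarith [abs_nonneg ((B : ℝ) * x - (m:ℝ))]
  -- assemble
  have hcast : ((j.toNat : ℕ) : ℝ) = (j : ℝ) := by exact_mod_cast Int.toNat_of_nonneg hj0
  refine ⟨j.toNat, ?_, ?_⟩
  · rw [hcast, hden]; exact hjRB
  · rw [hcast, hden]
    have htR : (j:ℝ) * (N:ℝ) - (m:ℝ) = (B : ℝ) * (t:ℝ) := by exact_mod_cast ht
    have htq : (t:ℝ) = ((j:ℝ) * (N:ℝ) - (m:ℝ)) / (B : ℝ) := by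
      rw [eq_div_iff hq0]; linarith
    have key : (j:ℝ) * α - x - (t:ℝ)
        = (j:ℝ) * (α - (N:ℝ)/(B : ℝ)) + ((m:ℝ)/(B : ℝ) - x) := by
      rw [htq]; ring
    have h32 : 1/(B : ℝ) + 1/(2*(B : ℝ)) ≤ 2/(B : ℝ) := by
      have h1 : 1/(2*(B : ℝ)) ≤ 1/(B : ℝ) := one_div_le_one_div_of_le hBR0 (by linarith)
      have h2 : 2/(B : ℝ) = 1/(B : ℝ) + 1/(B : ℝ) := by ring
      linarith
    calc distToInt ((j:ℝ) * α - x)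
        = |((j:ℝ) * α - x) - round ((j:ℝ) * α - x)| := rfl
      _ ≤ |((j:ℝ) * α - x) - (t:ℝ)| := round_le _ t
      _ = |(j:ℝ) * (α - (N:ℝ)/(B : ℝ)) + ((m:ℝ)/(B : ℝ) - x)| := by rw [key]
      _ ≤ 1/(B : ℝ) + 1/(2*(B : ℝ)) := (abs_add_le _ _).trans (add_le_add habs1 habs2)
      _ ≤ 2/(B : ℝ) := h32
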